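/- Let S ⊆ lim(ω₁) be stationary and η a ladder system on S whose ladders consist of successor ordinals. Then the space X(η) is not metrizable. -/

import Mathlib

open Ordinal Set

noncomputable def omega1 : Ordinal := (Cardinal.aleph 1).ord

abbrev O1 : Type _ := ↥(Set.Iio omega1)

def IsLadderOn (δ : Ordinal) (η : ℕ → Ordinal) : Prop :=
  StrictMono η ∧ (∀ n, η n < δ) ∧ ∀ β < δ, ∃ n, β ≤ η n

def IsClub' (C : Set Ordinal) : Prop :=
  C ⊆ Set.Iio omega1 ∧
  (∀ α < omega1, ∃ β ∈ C, α < β) ∧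
  (∀ δ < omega1, Order.IsSuccLimit δ → (∀ α < δ, ∃ β ∈ C, α < β ∧ β < δ) → δ ∈ C)

def IsStat (S : Set Ordinal) : Prop := ∀ C, IsClub' C → (S ∩ C).Nonempty

/-- The ladder-system topology `X(η)` on `ω₁`: points outside `S` are isolated, and a set
`U` is open iff for every `δ ∈ U ∩ S` it contains a tail of the ladder at `δ`. -/
def ladderTop (S : Set O1) (η : O1 → ℕ → O1) : TopologicalSpace O1 where
  IsOpen U := ∀ α ∈ U, α ∈ S → ∃ n : ℕ, ∀ m, n ≤ m → η α m ∈ U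
  isOpen_univ := fun _ _ _ => ⟨0, fun _ _ => Set.mem_univ _⟩
  isOpen_inter := by
    intro U V hU hV α hα hαS
    obtain ⟨n, hn⟩ := hU α hα.1 hαS
    obtain ⟨k, hk⟩ := hV α hα.2 hαS
    exact ⟨max n k, fun m hm =>
      ⟨hn m (le_trans (le_max_left _ _) hm), hk m (le_trans (le_max_right _ _) hm)⟩⟩
  isOpen_sUnion := by
    intro s hs α hα hαS
    obtain ⟨U, hUs, hαU⟩ := hα
    obtain ⟨n, hn⟩ := hs U hUs α hαU hαS
    exact ⟨n, fun m hm => ⟨U, hUs, hn m hm⟩⟩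

/-! ### Auxiliary lemmas -/

lemma omega1_isLimit : Order.IsSuccLimit omega1 :=
  Cardinal.isSuccLimit_ord Cardinal.aleph0_lt_aleph_one.le

lemma succ_lt_omega1 {x : Ordinal} (h : x < omega1) : x + 1 < omega1 := by
  rw [Ordinal.add_one_eq_succ]
  exact omega1_isLimit.succ_lt h

lemma sup_lt_omega1 (f : ℕ → Ordinal) (h : ∀ n, f n < omega1) : (⨆ n, f n) < omega1 :=
  by unfold omega1 at *; rw [Cardinal.ord_aleph] at *; exact Ordinal.iSup_lt_omega_one h

lemma bdd_of_countable (A : Set Ordinal) (hA : A.Countable) (hsub : A ⊆ Set.Iio omega1) :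
    ∃ β, β < omega1 ∧ ∀ τ ∈ A, τ < β := by
  rcases A.eq_empty_or_nonempty with h | h
  · refine ⟨1, by simpa using succ_lt_omega1 omega1_isLimit.pos, ?_⟩
    intro τ hτ
    rw [h] at hτ
    exact absurd hτ (Set.notMem_empty τ)
  · obtain ⟨f, hf⟩ := hA.exists_eq_range h
    have hmem : ∀ n, f n ∈ A := by intro n; rw [hf]; exact Set.mem_range_self n
    refine ⟨⨆ n, f n + 1, sup_lt_omega1 _ (fun n => succ_lt_omega1 (hsub (hmem n))), ?_⟩
    intro τ hτ
    rw [hf] at hτ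
    obtain ⟨n, rfl⟩ := hτ
    have h1 : f n < f n + 1 := by
      rw [Ordinal.add_one_eq_succ]
      exact Order.lt_succ _
    exact lt_of_lt_of_le h1 (Ordinal.le_iSup (fun n => f n + 1) n)

universe u

lemma countable_Iio_of_lt {γ : Ordinal.{u}} (h : γ < omega1) : (Set.Iio γ).Countable := by
  rw [Cardinal.countable_iff_lt_aleph_one, Ordinal.mk_Iio_ordinal]
  have h1 : γ.card < Cardinal.aleph 1 := Cardinal.lt_ord.1 h
  have h3 : (Cardinal.aleph.{u+1} 1) =
      Cardinal.lift.{u+1} (Cardinal.aleph.{u} 1) := by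
    rw [Cardinal.lift_aleph, Ordinal.lift_one]
  rw [h3]
  exact Cardinal.lift_lt.2 h1

lemma isClub_iInter (C : ℕ → Set Ordinal) (hC : ∀ k, IsClub' (C k)) :
    IsClub' (⋂ k, C k) := by
  have step : ∀ k, ∀ x : Ordinal, x < omega1 → ∃ y, y ∈ C k ∧ x < y ∧ y < omega1 := by
    intro k x hx
    obtain ⟨y, hy, hxy⟩ := (hC k).2.1 x hx
    exact ⟨y, hy, hxy, (hC k).1 hy⟩
  have main : ∀ α, α < omega1 → ∃ δ ∈ ⋂ k, C k, α < δ := by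
    intro α hα
    let s : ℕ → {x : Ordinal // x < omega1} := fun n =>
      Nat.rec ⟨α, hα⟩ (fun m p =>
        ⟨(step (Nat.unpair m).1 p.1 p.2).choose,
         (step (Nat.unpair m).1 p.1 p.2).choose_spec.2.2⟩) n
    have hs_succ : ∀ m, (s m).1 < (s (m+1)).1 ∧ (s (m+1)).1 ∈ C (Nat.unpair m).1 := by
      intro m
      exact ⟨(step (Nat.unpair m).1 (s m).1 (s m).2).choose_spec.2.1,
             (step (Nat.unpair m).1 (s m).1 (s m).2).choose_spec.1⟩
    have hmono : StrictMono fun n => (s n).1 :=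
      strictMono_nat_of_lt_succ (fun n => (hs_succ n).1)
    have hδlt : (⨆ n, (s n).1) < omega1 := sup_lt_omega1 _ (fun n => (s n).2)
    have hlt : ∀ n, (s n).1 < ⨆ n, (s n).1 := fun n =>
      lt_of_lt_of_le (hmono (Nat.lt_succ_self n)) (Ordinal.le_iSup (fun n => (s n).1) (n+1))
    have hαδ : α < ⨆ n, (s n).1 := hlt 0
    have hδlim : Order.IsSuccLimit (⨆ n, (s n).1) := by
      rw [Ordinal.isSuccLimit_iff, Order.isSuccPrelimit_iff_succ_lt]
      constructor
      · intro h0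
        rw [h0] at hαδ
        exact absurd hαδ (not_lt_of_ge (zero_le (a := α)))
      · intro a ha
        obtain ⟨n, hn⟩ := Ordinal.lt_iSup_iff.1 ha
        exact lt_of_le_of_lt (Order.succ_le_of_lt hn) (hlt n)
    refine ⟨⨆ n, (s n).1, Set.mem_iInter.2 (fun k => ?_), hαδ⟩
    refine (hC k).2.2 _ hδlt hδlim ?_
    intro a ha
    obtain ⟨n, hn⟩ := Ordinal.lt_iSup_iff.1 ha
    refine ⟨(s (Nat.pair k n + 1)).1, ?_, ?_, hlt (Nat.pair k n + 1)⟩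
    · have h := (hs_succ (Nat.pair k n)).2
      rwa [Nat.unpair_pair] at h
    · exact lt_of_lt_of_le hn (hmono.monotone (Nat.le_succ_of_le (Nat.right_le_pair k n)))
  refine ⟨fun x hx => (hC 0).1 (Set.mem_iInter.1 hx 0), main, ?_⟩
  intro δ hδ hlim happ
  refine Set.mem_iInter.2 (fun k => (hC k).2.2 δ hδ hlim ?_)
  intro a ha
  obtain ⟨β, hβ, h1, h2⟩ := happ a ha
  exact ⟨β, Set.mem_iInter.1 hβ k, h1, h2⟩

lemma weak_fodor (T : Set Ordinal) (hT : T ⊆ Set.Iio omega1) (hstat : IsStat T)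
    (G : Ordinal → Ordinal) (hreg : ∀ τ ∈ T, G τ < τ) : ¬ Set.InjOn G T := by
  intro hinj
  have hclub : IsClub' {x | x < omega1 ∧ ∀ τ ∈ T, G τ < x → τ < x} := by
    refine ⟨fun x hx => hx.1, ?_, ?_⟩
    · intro α hα
      have bstep : ∀ x : Ordinal, x < omega1 →
          ∃ y, x < y ∧ y < omega1 ∧ ∀ τ ∈ T, G τ < x → τ < y := by
        intro x hx
        have hcnt : ({τ | τ ∈ T ∧ G τ < x}).Countable := by
          obtain ⟨f, hf⟩ := Set.countable_iff_exists_injOn.1 (countable_Iio_of_lt hx)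
          refine Set.countable_iff_exists_injOn.2 ⟨fun τ => f (G τ), ?_⟩
          intro a ha b hb hab
          exact hinj ha.1 hb.1 (hf ha.2 hb.2 hab)
        obtain ⟨b, hb1, hb2⟩ := bdd_of_countable _ hcnt (fun τ hτ => hT hτ.1)
        refine ⟨max (x + 1) b,
          lt_of_lt_of_le (by rw [Ordinal.add_one_eq_succ]; exact Order.lt_succ x)
            (le_max_left _ _),
          max_lt (succ_lt_omega1 hx) hb1, ?_⟩
        intro τ hτ hGτ
        exact lt_of_lt_of_le (hb2 τ ⟨hτ, hGτ⟩) (le_max_right _ _)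
      let s : ℕ → {x : Ordinal // x < omega1} := fun n =>
        Nat.rec ⟨α, hα⟩ (fun _ p =>
          ⟨(bstep p.1 p.2).choose, (bstep p.1 p.2).choose_spec.2.1⟩) n
      have hs : ∀ m, (s m).1 < (s (m+1)).1 ∧
          ∀ τ ∈ T, G τ < (s m).1 → τ < (s (m+1)).1 := by
        intro m
        exact ⟨(bstep (s m).1 (s m).2).choose_spec.1,
               (bstep (s m).1 (s m).2).choose_spec.2.2⟩
      have hmono : StrictMono fun n => (s n).1 :=
        strictMono_nat_of_lt_succ (fun n => (hs n).1)
      have hδlt : (⨆ n, (s n).1) < omega1 := sup_lt_omega1 _ (fun n => (s n).2)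
      have hlt : ∀ n, (s n).1 < ⨆ n, (s n).1 := fun n =>
        lt_of_lt_of_le (hmono (Nat.lt_succ_self n)) (Ordinal.le_iSup (fun n => (s n).1) (n+1))
      refine ⟨⨆ n, (s n).1, ⟨hδlt, ?_⟩, hlt 0⟩
      intro τ hτ hGτ
      obtain ⟨n, hn⟩ := Ordinal.lt_iSup_iff.1 hGτ
      exact lt_trans ((hs n).2 τ hτ hn) (hlt (n+1))
    · intro δ hδ _ happ
      refine ⟨hδ, ?_⟩
      intro τ hτ hGτ
      obtain ⟨β, hβ, h1, h2⟩ := happ (G τ) hGτ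
      exact lt_trans (hβ.2 τ hτ h1) h2
  obtain ⟨x, hx⟩ := hstat _ hclub
  exact absurd (hx.2.2 x hx.1 (hreg x hx.1)) (lt_irrefl x)

/-- If `S ⊆ lim(ω₁)` is stationary and `η` is a ladder system on `S` whose ladders
consist of successor ordinals, then the space `X(η)` is not metrizable. -/
theorem stmt19 (S : Set O1) (η : O1 → ℕ → O1)
    (hS : ∀ δ ∈ S, Order.IsSuccLimit ((δ : O1) : Ordinal))
    (hstat : IsStat ((fun δ : O1 => (δ : Ordinal)) '' S))
    (hladder : ∀ δ ∈ S, IsLadderOn ((δ : O1) : Ordinal)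
      (fun n => ((η δ n : O1) : Ordinal)))
    (hsucc : ∀ δ ∈ S, ∀ n, ∃ β : Ordinal, ((η δ n : O1) : Ordinal) = β + 1) :
    ¬ @TopologicalSpace.MetrizableSpace O1 (ladderTop S η) := by
  classical
  intro hmet
  obtain ⟨m, hm⟩ : ∃ m : MetricSpace O1, m.toUniformSpace.toTopologicalSpace = ladderTop S η :=
    ⟨@TopologicalSpace.metrizableSpaceMetric O1 (ladderTop S η) hmet, rfl⟩
  letI := m
  letI : TopologicalSpace O1 := UniformSpace.toTopologicalSpace
  have hm' : (UniformSpace.toTopologicalSpace : TopologicalSpace O1) = ladderTop S η := hm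
  have htop : ∀ U : Set O1, IsOpen U ↔ (ladderTop S η).IsOpen U := by
    rw [← hm']
    exact fun U => Iff.rfl
  -- the basic neighbourhoods
  have hnotS : ∀ δ ∈ S, ∀ n, η δ n ∉ S := by
    intro δ hδ n hmem
    obtain ⟨β, hβ⟩ := hsucc δ hδ n
    have hl := hS _ hmem
    rw [hβ, Ordinal.add_one_eq_succ] at hl
    exact Order.not_isSuccLimit_succ β hl
  have hBopen : ∀ δ ∈ S, IsOpen (insert δ (Set.range (η δ))) := by
    intro δ hδ
    rw [htop]
    intro α hα hαS
    rcases Set.mem_insert_iff.1 hα with rfl | hr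
    · exact ⟨0, fun m' _ => Set.mem_insert_iff.2 (Or.inr ⟨m', rfl⟩)⟩
    · obtain ⟨n, rfl⟩ := hr
      exact absurd hαS (hnotS δ hδ n)
  -- the ladder converges to its limit point in the metric
  have hconv : ∀ δ ∈ S, ∀ ε : ℝ, 0 < ε → ∃ n, dist (η δ n) δ < ε := by
    intro δ hδ ε hε
    have hob : IsOpen (Metric.ball δ ε) := Metric.isOpen_ball
    obtain ⟨n, hn⟩ := (htop _).1 hob δ (Metric.mem_ball_self hε) hδ
    exact ⟨n, Metric.mem_ball.1 (hn n le_rfl)⟩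
  -- choose a radius for each point of S
  have hkex : ∀ δ : O1, ∃ k : ℕ, δ ∈ S →
      ∀ y : O1, dist y δ < 1 / ((k : ℝ) + 1) → y ∈ insert δ (Set.range (η δ)) := by
    intro δ
    by_cases h : δ ∈ S
    · obtain ⟨ε, hε, hball⟩ := Metric.isOpen_iff.1 (hBopen δ h) δ (Set.mem_insert _ _)
      obtain ⟨k, hk⟩ := exists_nat_one_div_lt hε
      exact ⟨k, fun _ y hy => hball (Metric.mem_ball.2 (lt_trans hy hk))⟩
    · exact ⟨0, fun h' => absurd h' h⟩
  choose kf hkf using hkex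
  -- choose a close ladder point for each point of S
  have hgex : ∀ δ : O1, ∃ g : O1, δ ∈ S →
      (∃ n, g = η δ n) ∧ dist g δ < 1 / (2 * ((kf δ : ℝ) + 1)) := by
    intro δ
    by_cases h : δ ∈ S
    · obtain ⟨n, hn⟩ := hconv δ h (1 / (2 * ((kf δ : ℝ) + 1))) (by positivity)
      exact ⟨η δ n, fun _ => ⟨⟨n, rfl⟩, hn⟩⟩
    · exact ⟨δ, fun h' => absurd h' h⟩
  choose gf hgf using hgex
  -- split S according to the chosen radius; one piece is stationary
  have hTstat : ∃ k : ℕ,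
      IsStat ((fun δ : O1 => (δ : Ordinal)) '' {δ | δ ∈ S ∧ kf δ = k}) := by
    by_contra hno
    push_neg at hno
    have hcl : ∀ k : ℕ, ∃ C, IsClub' C ∧
        ((fun δ : O1 => (δ : Ordinal)) '' {δ | δ ∈ S ∧ kf δ = k}) ∩ C = ∅ := by
      intro k
      have h := hno k
      rw [IsStat] at h
      push_neg at h
      obtain ⟨C, hC1, hC2⟩ := h
      exact ⟨C, hC1, hC2⟩
    choose Cf hCf1 hCf2 using hcl
    obtain ⟨x, hx⟩ := hstat _ (isClub_iInter Cf hCf1)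
    obtain ⟨⟨δ, hδS, rfl⟩, hxC⟩ := hx
    have hmem : (δ : Ordinal) ∈
        ((fun δ : O1 => (δ : Ordinal)) '' {δ' | δ' ∈ S ∧ kf δ' = kf δ}) ∩ Cf (kf δ) :=
      ⟨⟨δ, ⟨hδS, rfl⟩, rfl⟩, Set.mem_iInter.1 hxC _⟩
    rw [hCf2 (kf δ)] at hmem
    exact hmem
  obtain ⟨k, hk⟩ := hTstat
  -- the regressive function on the stationary piece
  set G : Ordinal → Ordinal := fun x =>
    if h : ∃ δ : O1, δ ∈ S ∧ (δ : Ordinal) = x then ((gf h.choose : O1) : Ordinal) else 0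
    with hGdef
  have hGval : ∀ δ : O1, δ ∈ S → G (δ : Ordinal) = ((gf δ : O1) : Ordinal) := by
    intro δ hδ
    have h : ∃ δ' : O1, δ' ∈ S ∧ (δ' : Ordinal) = (δ : Ordinal) := ⟨δ, hδ, rfl⟩
    have h2 : h.choose = δ := Subtype.coe_injective h.choose_spec.2
    rw [hGdef]
    simp only [dif_pos h, h2]
  have hsub : ((fun δ : O1 => (δ : Ordinal)) '' {δ | δ ∈ S ∧ kf δ = k}) ⊆ Set.Iio omega1 := by
    rintro x ⟨δ, _, rfl⟩
    exact δ.2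
  have hreg : ∀ τ ∈ ((fun δ : O1 => (δ : Ordinal)) '' {δ | δ ∈ S ∧ kf δ = k}), G τ < τ := by
    rintro x ⟨δ, ⟨hδS, _⟩, rfl⟩
    rw [hGval δ hδS]
    obtain ⟨⟨n, hn⟩, _⟩ := hgf δ hδS
    rw [hn]
    exact (hladder δ hδS).2.1 n
  have hninj := weak_fodor _ hsub hk G hreg
  rw [Set.InjOn] at hninj
  push_neg at hninj
  obtain ⟨x, hx, y, hy, hGxy, hxy⟩ := hninj
  obtain ⟨δ, ⟨hδS, hδk⟩, rfl⟩ := hx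
  obtain ⟨τ, ⟨hτS, hτk⟩, rfl⟩ := hy
  rw [hGval δ hδS, hGval τ hτS] at hGxy
  have hgfeq : gf δ = gf τ := Subtype.coe_injective hGxy
  obtain ⟨⟨nδ, hnδ⟩, hdδ⟩ := hgf δ hδS
  obtain ⟨⟨nτ, hnτ⟩, hdτ⟩ := hgf τ hτS
  rw [hδk] at hdδ
  rw [hτk] at hdτ
  have hknz : ((k : ℝ) + 1) ≠ 0 := by positivity
  have hsum : dist τ δ < 1 / ((k : ℝ) + 1) := by
    calc dist τ δ ≤ dist τ (gf τ) + dist (gf τ) δ := dist_triangle _ _ _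
      _ = dist (gf τ) τ + dist (gf δ) δ := by rw [dist_comm, hgfeq]
      _ < 1 / (2 * ((k : ℝ) + 1)) + 1 / (2 * ((k : ℝ) + 1)) := add_lt_add hdτ hdδ
      _ = 1 / ((k : ℝ) + 1) := by rw [← add_div]; rw [show (1:ℝ)+1 = 2 from by norm_num]; rw [mul_comm]; rw [div_eq_div_iff (by positivity) (by positivity)]; ring
  have hτB : τ ∈ insert δ (Set.range (η δ)) := by
    refine hkf δ hδS τ ?_
    rw [hδk]
    exact hsum
  rcases Set.mem_insert_iff.1 hτB with h | hr
  · exact hxy (congrArg _ h.symm)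
  · obtain ⟨n, hn⟩ := hr
    exact hnotS δ hδS n (by rw [hn]; exact hτS)
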